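/- For the discrete distribution with atoms v_i = 2^{i-1} (1 ≤ i ≤ n-1), v_n = √n·2^{n-2} and weights w_i = (1/2)^i, w_n = (1/2)^{n-1}, setting the price at v_{n-1} yields welfare E[v·1[v ≥ v_{n-1}]] = 1/2 + √n/2 while the total expected welfare is E[v] = (n-1)/2 + √n/2; hence the welfare ratio E[v]/E[v·1[v ≥ v_{n-1}]] is Θ(√n). -/

import Mathlib

open Finset in
/-- For the discrete distribution with atoms `vᵢ = 2^(i-1)` (`i ≤ n-1`),
`vₙ = √n·2^(n-2)` and weights `wᵢ = (1/2)^i`, `wₙ = (1/2)^(n-1)` (`n ≥ 5`), setting the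
price at `v_{n-1}` yields welfare `E[v·1[v ≥ v_{n-1}]] = 1/2 + √n/2` while the total
welfare is `E[v] = (n-1)/2 + √n/2`; hence the welfare ratio is `Θ(√n)`
(it lies between `√n/4` and `√n`). -/
theorem stmt_13 (n : ℕ) (hn : 5 ≤ n) (v w : ℕ → ℝ)
    (hv : ∀ i, 1 ≤ i → i ≤ n - 1 → v i = 2 ^ (i - 1))
    (hvn : v n = Real.sqrt n * 2 ^ (n - 2))
    (hw : ∀ i, 1 ≤ i → i ≤ n - 1 → w i = (1 / 2 : ℝ) ^ i)
    (hwn : w n = (1 / 2 : ℝ) ^ (n - 1)) :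
    (∑ j ∈ Icc (n - 1) n, v j * w j = 1 / 2 + Real.sqrt n / 2) ∧
    (∑ j ∈ Icc 1 n, v j * w j = (n - 1) / 2 + Real.sqrt n / 2) ∧
    (Real.sqrt n / 4 ≤
        (∑ j ∈ Icc 1 n, v j * w j) / (∑ j ∈ Icc (n - 1) n, v j * w j) ∧
      (∑ j ∈ Icc 1 n, v j * w j) / (∑ j ∈ Icc (n - 1) n, v j * w j) ≤
        Real.sqrt n) := by
  obtain ⟨m, rfl⟩ : ∃ m, n = m + 1 := ⟨n - 1, by omega⟩
  have hm : 4 ≤ m := by omega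
  set s := Real.sqrt (m + 1 : ℕ) with hs
  have hs0 : 0 ≤ s := Real.sqrt_nonneg _
  have hs2 : s ^ 2 = (m + 1 : ℕ) := Real.sq_sqrt (by positivity)
  -- each term for j ≤ m is 1/2
  have hterm : ∀ j, 1 ≤ j → j ≤ m → v j * w j = 1 / 2 := by
    intro j h1 h2
    rw [hv j h1 (by omega), hw j h1 (by omega)]
    have h2j : (2:ℝ) ^ j = 2 ^ (j - 1) * 2 := by
      rw [← pow_succ]; congr 1; omega
    rw [one_div, inv_pow, h2j]
    have : (2:ℝ) ^ (j - 1) ≠ 0 := by positivity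
    field_simp
  -- last term
  have hlast : v (m + 1) * w (m + 1) = s / 2 := by
    rw [hvn, hwn]
    have e1 : m + 1 - 2 = m - 1 := by omega
    have e2 : m + 1 - 1 = m := by omega
    rw [e1, e2]
    have h2m : (2:ℝ) ^ m = 2 ^ (m - 1) * 2 := by
      rw [← pow_succ]; congr 1; omega
    rw [one_div, inv_pow, h2m]
    have : (2:ℝ) ^ (m - 1) ≠ 0 := by positivity
    field_simp
  have hS : ∑ j ∈ Icc (m + 1 - 1) (m + 1), v j * w j = 1 / 2 + s / 2 := by
    rw [show m + 1 - 1 = m from rfl, Finset.sum_Icc_succ_top (by omega),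
      Finset.Icc_self, Finset.sum_singleton, hterm m (by omega) le_rfl, hlast]
  have hT : ∑ j ∈ Icc 1 (m + 1), v j * w j = ((m + 1 : ℕ) - 1) / 2 + s / 2 := by
    rw [Finset.sum_Icc_succ_top (by omega), hlast]
    have hc : ∑ j ∈ Icc 1 m, v j * w j = ∑ j ∈ Icc 1 m, (1 / 2 : ℝ) :=
      Finset.sum_congr rfl fun j hj => by
        rw [Finset.mem_Icc] at hj; exact hterm j hj.1 hj.2
    rw [hc, Finset.sum_const, Nat.card_Icc]
    push_cast
    ring
  have hSpos : (0:ℝ) < 1 / 2 + s / 2 := by linarith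
  refine ⟨hS, hT, ?_, ?_⟩
  · rw [hS, hT, le_div_iff₀ hSpos]
    have hm' : (5:ℝ) ≤ (m + 1 : ℕ) := by exact_mod_cast hn
    nlinarith [hs2]
  · rw [hS, hT, div_le_iff₀ hSpos]
    have hm' : (5:ℝ) ≤ (m + 1 : ℕ) := by exact_mod_cast hn
    nlinarith [hs2]
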